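/- Let X be a measurable space, Θ a measurable space, and ρ : Θ × Θ → ℝ a nonnegative, symmetric, jointly measurable loss function. Let d ≥ 1, let E_d = {−1,1}^d, and let (P_e)_{e∈E_d} be probability measures on X and (θ_e)_{e∈E_d} elements of Θ. Suppose there exist τ ∈ ℝ and α > 0 such that (i) for all u, v ∈ E_d, ρ(θ_u, θ_v) ≥ 2τ·#{i : uᵢ ≠ vᵢ}, and (ii) for all u, v ∈ E_d and all t ∈ Θ, ρ(θ_u, θ_v) ≤ α·( ρ(θ_u, t) + ρ(θ_v, t) ). For i ∈ {1,…,d} define the mixtures P_{+i} = 2^{1−d}·Σ_{e∈E_d : eᵢ=1} P_e and P_{−i} = 2^{1−d}·Σ_{e∈E_d : eᵢ=−1} P_e. Then for every measurable estimator θ̂ : X → Θ, max_{e∈E_d} E_{X∼P_e}[ ρ(θ̂(X), θ_e) ] ≥ (τ/(2α))·Σ_{i=1}^d ( 1 − TV(P_{+i}, P_{−i}) ). -/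

import Mathlib

open MeasureTheory

/-- Total variation distance between two measures:
`TV(P,Q) = sup_{S measurable} |P(S) − Q(S)|`. -/
noncomputable def tvDist {X : Type*} [MeasurableSpace X] (P Q : Measure X) : ℝ :=
  ⨆ S : {S : Set X // MeasurableSet S}, |(P S.1).toReal - (Q S.1).toReal|

/-- The Assouad mixture `P_{+i}` (for `b = true`) resp. `P_{−i}` (for `b = false`):
`2^{1−d} Σ_{e : e_i = b} P_e`. -/
noncomputable def assouadMix {X : Type*} [MeasurableSpace X] {d : ℕ}
    (P : (Fin d → Bool) → Measure X) (i : Fin d) (b : Bool) : Measure X :=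
  ((2:ENNReal)^(d-1))⁻¹ • ∑ e ∈ Finset.univ.filter (fun e : Fin d → Bool => e i = b), P e


lemma card_filter_eq (d : ℕ) (hd : 1 ≤ d) (i : Fin d) (b : Bool) :
    (Finset.univ.filter (fun e : Fin d → Bool => e i = b)).card = 2^(d-1) := by
  have key : (Finset.univ.filter (fun e : Fin d → Bool => e i = true)).card
      = (Finset.univ.filter (fun e : Fin d → Bool => e i = false)).card := by
    apply Finset.card_nbij' (fun e => Function.update e i (!e i))
      (fun e => Function.update e i (!e i))
    · intro e he
      simp only [Finset.mem_coe, Finset.mem_filter, Finset.mem_univ, true_and] at he ⊢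
      simp [he]
    · intro e he
      simp only [Finset.mem_coe, Finset.mem_filter, Finset.mem_univ, true_and] at he ⊢
      simp [he]
    · intro e _
      simp [Function.update_idem]
    · intro e _
      simp [Function.update_idem]
  have htot : (Finset.univ.filter (fun e : Fin d → Bool => e i = true)).card
      + (Finset.univ.filter (fun e : Fin d → Bool => e i = false)).card = 2^d := by
    have h := Finset.card_filter_add_card_filter_not
      (s := (Finset.univ : Finset (Fin d → Bool))) (p := fun e => e i = true)
    simp only [Bool.not_eq_true, Finset.card_univ] at h
    rw [h]
    simp [Fintype.card_fun]
  have hpow : 2^d = 2 * 2^(d-1) := by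
    conv_lhs => rw [← Nat.succ_pred_eq_of_pos hd]
    rw [pow_succ, Nat.pred_eq_sub_one, Nat.mul_comm]
  have h2 : 2 * (Finset.univ.filter (fun e : Fin d → Bool => e i = true)).card
      = 2 * 2^(d-1) := by
    rw [two_mul]
    nth_rewrite 2 [key]
    rw [htot, hpow]
  have htrue := Nat.eq_of_mul_eq_mul_left (by norm_num) h2
  cases b
  · rw [← key]; exact htrue
  · exact htrue

lemma tv_bdd {X : Type*} [MeasurableSpace X] (P Q : Measure X)
    [IsProbabilityMeasure P] [IsProbabilityMeasure Q] :
    ∀ S : {S : Set X // MeasurableSet S}, |(P S.1).toReal - (Q S.1).toReal| ≤ 1 := by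
  intro S
  have h1 : (P S.1).toReal ≤ 1 := by
    rw [show (1:ℝ) = (P Set.univ).toReal by simp]
    exact ENNReal.toReal_mono (measure_ne_top _ _) (measure_mono (Set.subset_univ _))
  have h2 : (Q S.1).toReal ≤ 1 := by
    rw [show (1:ℝ) = (Q Set.univ).toReal by simp]
    exact ENNReal.toReal_mono (measure_ne_top _ _) (measure_mono (Set.subset_univ _))
  have h3 : 0 ≤ (P S.1).toReal := ENNReal.toReal_nonneg
  have h4 : 0 ≤ (Q S.1).toReal := ENNReal.toReal_nonneg
  rw [abs_le]; constructor <;> linarith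

lemma tv_le_one {X : Type*} [MeasurableSpace X] (P Q : Measure X)
    [IsProbabilityMeasure P] [IsProbabilityMeasure Q] : tvDist P Q ≤ 1 :=
  ciSup_le (tv_bdd P Q)

lemma le_tv {X : Type*} [MeasurableSpace X] (P Q : Measure X)
    [IsProbabilityMeasure P] [IsProbabilityMeasure Q] {S : Set X} (hS : MeasurableSet S) :
    |(P S).toReal - (Q S).toReal| ≤ tvDist P Q :=
  le_ciSup ⟨1, Set.forall_mem_range.2 (tv_bdd P Q)⟩ (⟨S, hS⟩ : {S : Set X // MeasurableSet S})

lemma exists_meas_argmin {X : Type*} [MeasurableSpace X] {E : Type*} [Fintype E] [Nonempty E]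
    (f : E → X → ℝ) (hf : ∀ e, Measurable (f e)) :
    ∃ sel : X → E, (∀ x e, f (sel x) x ≤ f e x) ∧ ∀ u : E, MeasurableSet {x | sel x = u} := by
  classical
  set n := Fintype.card E with hn
  set ι : Fin n ≃ E := (Fintype.equivFin E).symm with hι
  set mset : X → Finset (Fin n) :=
    fun x => Finset.univ.filter (fun k => ∀ j, f (ι k) x ≤ f (ι j) x) with hmset
  have hne : ∀ x, (mset x).Nonempty := by
    intro x
    obtain ⟨k, -, hk⟩ := Finset.exists_min_image Finset.univ (fun k => f (ι k) x)
      ⟨(Fintype.equivFin E) (Classical.arbitrary E), Finset.mem_univ _⟩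
    exact ⟨k, Finset.mem_filter.2 ⟨Finset.mem_univ _, fun j => hk j (Finset.mem_univ _)⟩⟩
  set m : X → Fin n := fun x => (mset x).min' (hne x) with hm
  have hmem : ∀ x, m x ∈ mset x := fun x => Finset.min'_mem _ _
  have hGm : ∀ k, MeasurableSet {x | ∀ j, f (ι k) x ≤ f (ι j) x} := by
    intro k
    have : {x | ∀ j, f (ι k) x ≤ f (ι j) x} = ⋂ j, {x | f (ι k) x ≤ f (ι j) x} := by
      ext x; simp
    rw [this]
    exact MeasurableSet.iInter (fun j => measurableSet_le (hf _) (hf _))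
  have hmk : ∀ k, MeasurableSet {x | m x = k} := by
    intro k
    have heq : {x | m x = k} =
        {x | ∀ j, f (ι k) x ≤ f (ι j) x} ∩ ⋂ k' : Fin n, ⋂ (_ : k' < k),
          {x | ∀ j, f (ι k') x ≤ f (ι j) x}ᶜ := by
      ext x
      simp only [Set.mem_setOf_eq, Set.mem_inter_iff, Set.mem_iInter, Set.mem_compl_iff]
      constructor
      · rintro rfl
        refine ⟨by have := hmem x; simp only [hmset, Finset.mem_filter] at this; exact this.2, ?_⟩
        intro k' hk' hcon
        have : m x ≤ k' := Finset.min'_le _ _ (Finset.mem_filter.2 ⟨Finset.mem_univ _, hcon⟩)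
        exact absurd this (not_le.2 hk')
      · rintro ⟨h1, h2⟩
        have hkm : k ∈ mset x := Finset.mem_filter.2 ⟨Finset.mem_univ _, h1⟩
        have hle : m x ≤ k := Finset.min'_le _ _ hkm
        rcases lt_or_eq_of_le hle with hlt | heq2
        · exfalso
          apply h2 _ hlt
          have hmm := hmem x
          simp only [hmset, Finset.mem_filter] at hmm
          exact hmm.2
        · exact heq2
    rw [heq]
    exact (hGm k).inter (MeasurableSet.iInter fun k' => MeasurableSet.iInter fun _ => (hGm k').compl)
  refine ⟨fun x => ι (m x), ?_, ?_⟩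
  · intro x e
    have := hmem x
    simp only [hmset, Finset.mem_filter] at this
    have h := this.2 (ι.symm e)
    simpa using h
  · intro u
    have : {x | ι (m x) = u} = {x | m x = ι.symm u} := by
      ext x; simp [Equiv.eq_symm_apply]
    rw [this]
    exact hmk _

/-- Assouad's lemma. The maximum risk over the hypercube is attained by
some vertex `e` and is lower bounded by `(τ/(2α))·Σᵢ(1 − TV(P_{+i}, P_{−i}))`. -/
theorem assouad_lemma {X Θ' : Type*} [MeasurableSpace X] [MeasurableSpace Θ']
    (ρ : Θ' × Θ' → ℝ) (hρ0 : ∀ p, 0 ≤ ρ p) (hρsymm : ∀ a b, ρ (a, b) = ρ (b, a))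
    (hρmeas : Measurable ρ)
    (d : ℕ) (hd : 1 ≤ d)
    (P : (Fin d → Bool) → Measure X) (hP : ∀ e, IsProbabilityMeasure (P e))
    (θv : (Fin d → Bool) → Θ') (τ α : ℝ) (hα : 0 < α)
    (hsep : ∀ u v : Fin d → Bool,
      2 * τ * ((Finset.univ.filter fun i => u i ≠ v i).card : ℝ) ≤ ρ (θv u, θv v))
    (htri : ∀ (u v : Fin d → Bool) (t : Θ'),
      ρ (θv u, θv v) ≤ α * (ρ (θv u, t) + ρ (θv v, t)))
    (est : X → Θ') (hest : Measurable est) :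
    ∃ e : Fin d → Bool,
      ENNReal.ofReal
          ((τ / (2 * α)) * ∑ i : Fin d, (1 - tvDist (assouadMix P i true) (assouadMix P i false))) ≤
        ∫⁻ x, ENNReal.ofReal (ρ (est x, θv e)) ∂(P e) := by
  classical
  haveI := fun e => hP e
  -- basic ENNReal facts
  have h2ne : ((2:ENNReal)^(d-1)) ≠ 0 := by positivity
  have h2top : ((2:ENNReal)^(d-1)) ≠ ⊤ := by
    exact ENNReal.pow_ne_top (by norm_num)
  have hmixapply : ∀ (i : Fin d) (b : Bool) (s : Set X), assouadMix P i b s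
      = ((2:ENNReal)^(d-1))⁻¹ * ∑ e ∈ Finset.univ.filter (fun e : Fin d → Bool => e i = b), P e s := by
    intro i b s
    rw [assouadMix, Measure.smul_apply, Measure.finset_sum_apply, smul_eq_mul]
  haveI hmixprob : ∀ (i : Fin d) (b : Bool), IsProbabilityMeasure (assouadMix P i b) := by
    intro i b
    constructor
    rw [hmixapply]
    have : ∀ e ∈ Finset.univ.filter (fun e : Fin d → Bool => e i = b),
        P e Set.univ = 1 := fun e _ => measure_univ
    rw [Finset.sum_congr rfl this, Finset.sum_const, nsmul_eq_mul, mul_one,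
      card_filter_eq d hd i b]
    push_cast
    exact ENNReal.inv_mul_cancel h2ne h2top
  have hTVle1 : ∀ i : Fin d, tvDist (assouadMix P i true) (assouadMix P i false) ≤ 1 :=
    fun i => tv_le_one _ _
  rcases le_or_gt τ 0 with hτ | hτ
  · -- trivial case
    refine ⟨fun _ => true, ?_⟩
    have hle0 : (τ / (2 * α)) * ∑ i : Fin d,
        (1 - tvDist (assouadMix P i true) (assouadMix P i false)) ≤ 0 := by
      apply mul_nonpos_of_nonpos_of_nonneg
      · apply div_nonpos_of_nonpos_of_nonneg hτ; linarith
      · apply Finset.sum_nonneg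
        intro i _
        have := hTVle1 i
        linarith
    rw [ENNReal.ofReal_eq_zero.mpr hle0]
    exact zero_le
  -- main case
  set f : (Fin d → Bool) → X → ℝ := fun e x => ρ (est x, θv e) with hfdef
  have hf : ∀ e, Measurable (f e) := fun e => hρmeas.comp (hest.prodMk measurable_const)
  obtain ⟨sel, hselmin, hselmeas⟩ := exists_meas_argmin f hf
  set A : Fin d → Bool → Set X := fun i b => {x | sel x i = b} with hAdef
  have hA : ∀ i b, MeasurableSet (A i b) := by
    intro i b
    have : A i b = ⋃ (u : Fin d → Bool) (_ : u i = b), {x | sel x = u} := by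
      ext x
      simp only [hAdef, Set.mem_setOf_eq, Set.mem_iUnion]
      exact ⟨fun h => ⟨sel x, h, rfl⟩, fun ⟨u, hu, h⟩ => by rw [h]; exact hu⟩
    rw [this]
    exact MeasurableSet.iUnion fun u => MeasurableSet.iUnion fun _ => hselmeas u
  set S : (Fin d → Bool) → Fin d → Set X := fun e i => {x | e i ≠ sel x i} with hSdef
  have hSA : ∀ e i, S e i = A i (!e i) := by
    intro e i
    ext x
    simp only [hSdef, hAdef, Set.mem_setOf_eq]
    cases he : e i <;> cases hs : sel x i <;> simp
  have hS : ∀ e i, MeasurableSet (S e i) := fun e i => (hSA e i) ▸ hA i (!e i)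
  -- pointwise bound
  have hτα : (0:ℝ) ≤ τ / α := le_of_lt (div_pos hτ hα)
  have hpt : ∀ (e : Fin d → Bool) (x : X),
      ENNReal.ofReal (τ/α) * (((Finset.univ.filter fun i => e i ≠ sel x i).card : ℕ) : ENNReal)
        ≤ ENNReal.ofReal (ρ (est x, θv e)) := by
    intro e x
    have h1 := hsep e (sel x)
    have h2 := htri e (sel x) (est x)
    have h3 : ρ (θv (sel x), est x) ≤ ρ (θv e, est x) := by
      rw [hρsymm (θv (sel x)) (est x), hρsymm (θv e) (est x)]
      exact hselmin x e
    have hreal : (τ/α) * ((Finset.univ.filter fun i => e i ≠ sel x i).card : ℝ)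
        ≤ ρ (est x, θv e) := by
      rw [hρsymm (est x) (θv e), div_mul_eq_mul_div, div_le_iff₀ hα]
      nlinarith
    calc ENNReal.ofReal (τ/α) * (((Finset.univ.filter fun i => e i ≠ sel x i).card : ℕ) : ENNReal)
        = ENNReal.ofReal ((τ/α) * ((Finset.univ.filter fun i => e i ≠ sel x i).card : ℝ)) := by
          rw [ENNReal.ofReal_mul hτα, ENNReal.ofReal_natCast]
      _ ≤ ENNReal.ofReal (ρ (est x, θv e)) := ENNReal.ofReal_le_ofReal hreal
  -- integral bound per e
  set R : (Fin d → Bool) → ENNReal := fun e => ∫⁻ x, ENNReal.ofReal (ρ (est x, θv e)) ∂(P e) with hRdef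
  have hcard_ind : ∀ (e : Fin d → Bool) (x : X),
      (((Finset.univ.filter fun i => e i ≠ sel x i).card : ℕ) : ENNReal)
        = ∑ i : Fin d, (S e i).indicator (1 : X → ENNReal) x := by
    intro e x
    rw [Finset.card_filter]
    push_cast
    apply Finset.sum_congr rfl
    intro i _
    by_cases h : e i = sel x i
    · simp [Set.indicator, hSdef, h]
    · simp [Set.indicator, hSdef, h]
  have hR : ∀ e : Fin d → Bool, ENNReal.ofReal (τ/α) * ∑ i : Fin d, P e (S e i) ≤ R e := by
    intro e
    have hint : ∫⁻ x, (((Finset.univ.filter fun i => e i ≠ sel x i).card : ℕ) : ENNReal) ∂(P e)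
        = ∑ i : Fin d, P e (S e i) := by
      rw [lintegral_congr (hcard_ind e),
        lintegral_finset_sum _ (fun i _ => (measurable_one.indicator (hS e i)))]
      exact Finset.sum_congr rfl fun i _ => lintegral_indicator_one (hS e i)
    calc ENNReal.ofReal (τ/α) * ∑ i : Fin d, P e (S e i)
        = ∫⁻ x, ENNReal.ofReal (τ/α) *
            (((Finset.univ.filter fun i => e i ≠ sel x i).card : ℕ) : ENNReal) ∂(P e) := by
          rw [lintegral_const_mul' _ _ ENNReal.ofReal_ne_top, hint]
      _ ≤ R e := lintegral_mono (fun x => hpt e x)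
  -- per-coordinate mixture identity
  have hmix' : ∀ (i : Fin d) (b : Bool) (s : Set X),
      ∑ e ∈ Finset.univ.filter (fun e : Fin d → Bool => e i = b), P e s
        = (2:ENNReal)^(d-1) * assouadMix P i b s := by
    intro i b s
    rw [hmixapply, ← mul_assoc, ENNReal.mul_inv_cancel h2ne h2top, one_mul]
  have hsum_i : ∀ i : Fin d, ∑ e : (Fin d → Bool), P e (S e i)
      = (2:ENNReal)^(d-1) * ((assouadMix P i true) (A i false) + (assouadMix P i false) (A i true)) := by
    intro i
    have hsplit := Finset.sum_filter_add_sum_filter_not Finset.univ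
      (fun e : Fin d → Bool => e i = true) (fun e => P e (S e i))
    rw [← hsplit]
    have ht : ∑ e ∈ Finset.univ.filter (fun e : Fin d → Bool => e i = true), P e (S e i)
        = ∑ e ∈ Finset.univ.filter (fun e : Fin d → Bool => e i = true), P e (A i false) := by
      apply Finset.sum_congr rfl
      intro e he
      simp only [Finset.mem_filter] at he
      rw [hSA e i, he.2]
      rfl
    have hfneg : Finset.univ.filter (fun e : Fin d → Bool => ¬ e i = true)
        = Finset.univ.filter (fun e : Fin d → Bool => e i = false) := by
      apply Finset.filter_congr
      intro e _
      simp
    have hfalse : ∑ e ∈ Finset.univ.filter (fun e : Fin d → Bool => ¬ e i = true), P e (S e i)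
        = ∑ e ∈ Finset.univ.filter (fun e : Fin d → Bool => e i = false), P e (A i true) := by
      rw [hfneg]
      apply Finset.sum_congr rfl
      intro e he
      simp only [Finset.mem_filter] at he
      rw [hSA e i, he.2]
      rfl
    rw [ht, hfalse, hmix' i true, hmix' i false, mul_add]
  -- TV bound per coordinate
  have hTVbound : ∀ i : Fin d,
      ENNReal.ofReal (1 - tvDist (assouadMix P i true) (assouadMix P i false))
        ≤ (assouadMix P i true) (A i false) + (assouadMix P i false) (A i true) := by
    intro i
    haveI := hmixprob i true
    haveI := hmixprob i false
    have hcompl : A i false = (A i true)ᶜ := by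
      ext x
      simp only [hAdef, Set.mem_setOf_eq, Set.mem_compl_iff]
      cases h : sel x i <;> simp
    set μT := assouadMix P i true with hμT
    set μF := assouadMix P i false with hμF
    haveI : IsProbabilityMeasure μT := hmixprob i true
    haveI : IsProbabilityMeasure μF := hmixprob i false
    set p := (μT (A i true)).toReal with hp
    set q := (μF (A i true)).toReal with hq
    have habs : |p - q| ≤ tvDist μT μF := le_tv μT μF (hA i true)
    have hsum1 : μT (A i true) + μT ((A i true)ᶜ) = 1 := prob_add_prob_compl (hA i true)
    have hTc : (μT ((A i true)ᶜ)).toReal = 1 - p := by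
      have := congrArg ENNReal.toReal hsum1
      rw [ENNReal.toReal_add (measure_ne_top _ _) (measure_ne_top _ _), ENNReal.toReal_one] at this
      linarith
    have hfin : μT (A i false) + μF (A i true) ≠ ⊤ :=
      ENNReal.add_ne_top.2 ⟨measure_ne_top _ _, measure_ne_top _ _⟩
    have htr : (μT (A i false) + μF (A i true)).toReal = (1 - p) + q := by
      rw [ENNReal.toReal_add (measure_ne_top _ _) (measure_ne_top _ _), hcompl, hTc, hq]
    have hle : 1 - tvDist μT μF ≤ (μT (A i false) + μF (A i true)).toReal := by
      rw [htr]
      have : p - q ≤ |p - q| := le_abs_self _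
      linarith
    calc ENNReal.ofReal (1 - tvDist μT μF)
        ≤ ENNReal.ofReal ((μT (A i false) + μF (A i true)).toReal) :=
          ENNReal.ofReal_le_ofReal hle
      _ = μT (A i false) + μF (A i true) := ENNReal.ofReal_toReal hfin
  -- pow identity
  have hpowENN : (2:ENNReal)^d = 2 * 2^(d-1) := by
    conv_lhs => rw [← Nat.succ_pred_eq_of_pos hd]
    rw [pow_succ, Nat.pred_eq_sub_one, mul_comm]
  have h2dne : ((2:ENNReal)^d) ≠ 0 := by positivity
  have h2dtop : ((2:ENNReal)^d) ≠ ⊤ := ENNReal.pow_ne_top (by norm_num)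
  have hinvhalf : ((2:ENNReal)^d)⁻¹ * (2:ENNReal)^(d-1) = 2⁻¹ := by
    rw [hpowENN, ENNReal.mul_inv (Or.inl (by norm_num)) (Or.inl (by norm_num)),
      mul_assoc, ENNReal.inv_mul_cancel h2ne h2top, mul_one]
  -- half as ofReal
  have hhalf : ENNReal.ofReal (1/2 : ℝ) = 2⁻¹ := by
    rw [show (1/2 : ℝ) = (2:ℝ)⁻¹ by norm_num, ENNReal.ofReal_inv_of_pos (by norm_num)]
    norm_num
  -- per-coordinate final bound
  have hper : ∀ i : Fin d,
      ENNReal.ofReal ((τ / (2*α)) * (1 - tvDist (assouadMix P i true) (assouadMix P i false)))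
        ≤ ENNReal.ofReal (τ/α) * (((2:ENNReal)^d)⁻¹ * ∑ e : (Fin d → Bool), P e (S e i)) := by
    intro i
    rw [hsum_i i, ← mul_assoc (((2:ENNReal)^d)⁻¹), hinvhalf]
    have heq1 : ENNReal.ofReal ((τ / (2*α)) * (1 - tvDist (assouadMix P i true) (assouadMix P i false)))
        = ENNReal.ofReal (τ/α) * (2⁻¹ *
          ENNReal.ofReal (1 - tvDist (assouadMix P i true) (assouadMix P i false))) := by
      rw [show (τ / (2*α)) * (1 - tvDist (assouadMix P i true) (assouadMix P i false))
          = (τ/α) * ((1/2) * (1 - tvDist (assouadMix P i true) (assouadMix P i false))) by ring]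
      rw [ENNReal.ofReal_mul hτα, ENNReal.ofReal_mul (by norm_num), hhalf]
    rw [heq1]
    apply mul_le_mul_right
    apply mul_le_mul_right
    exact hTVbound i
  -- choose maximizing e
  obtain ⟨e0, -, hmax⟩ := Finset.exists_max_image Finset.univ R
    ⟨(fun _ => true), Finset.mem_univ _⟩
  refine ⟨e0, ?_⟩
  have hcardE : ((Fintype.card (Fin d → Bool) : ℕ) : ENNReal) = (2:ENNReal)^d := by
    rw [show Fintype.card (Fin d → Bool) = 2^d by simp [Fintype.card_fun]]
    push_cast
    ring
  have hsumR : ∑ e : (Fin d → Bool), R e ≤ (2:ENNReal)^d * R e0 := by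
    calc ∑ e : (Fin d → Bool), R e ≤ ∑ _e : (Fin d → Bool), R e0 :=
          Finset.sum_le_sum (fun e _ => hmax e (Finset.mem_univ e))
      _ = ((Fintype.card (Fin d → Bool) : ℕ) : ENNReal) * R e0 := by
          rw [Finset.sum_const, nsmul_eq_mul, Finset.card_univ]
      _ = (2:ENNReal)^d * R e0 := by rw [hcardE]
  have hmain : ENNReal.ofReal
      ((τ / (2 * α)) * ∑ i : Fin d, (1 - tvDist (assouadMix P i true) (assouadMix P i false)))
      ≤ ((2:ENNReal)^d)⁻¹ * ∑ e : (Fin d → Bool), R e := by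
    have hnneg : ∀ i ∈ (Finset.univ : Finset (Fin d)),
        0 ≤ (τ / (2*α)) * (1 - tvDist (assouadMix P i true) (assouadMix P i false)) := by
      intro i _
      apply mul_nonneg
      · positivity
      · have := hTVle1 i; linarith
    rw [Finset.mul_sum, ENNReal.ofReal_sum_of_nonneg hnneg]
    calc ∑ i : Fin d, ENNReal.ofReal
          ((τ / (2*α)) * (1 - tvDist (assouadMix P i true) (assouadMix P i false)))
        ≤ ∑ i : Fin d, ENNReal.ofReal (τ/α) * (((2:ENNReal)^d)⁻¹ * ∑ e : (Fin d → Bool), P e (S e i)) :=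
          Finset.sum_le_sum (fun i _ => hper i)
      _ = ((2:ENNReal)^d)⁻¹ * ∑ e : (Fin d → Bool), (ENNReal.ofReal (τ/α) * ∑ i : Fin d, P e (S e i)) := by
          rw [Finset.mul_sum]
          rw [show ∑ e : (Fin d → Bool), ((2:ENNReal)^d)⁻¹ * (ENNReal.ofReal (τ/α) * ∑ i : Fin d, P e (S e i))
            = ∑ e : (Fin d → Bool), ∑ i : Fin d, ((2:ENNReal)^d)⁻¹ * (ENNReal.ofReal (τ/α) * P e (S e i)) by
              apply Finset.sum_congr rfl; intro e _; rw [Finset.mul_sum, Finset.mul_sum]]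
          rw [Finset.sum_comm]
          apply Finset.sum_congr rfl
          intro i _
          rw [Finset.mul_sum, Finset.mul_sum]
          apply Finset.sum_congr rfl
          intro e _
          ring
      _ ≤ ((2:ENNReal)^d)⁻¹ * ∑ e : (Fin d → Bool), R e :=
          mul_le_mul_right (Finset.sum_le_sum (fun e _ => hR e)) _
  refine le_trans hmain (le_trans (mul_le_mul_right hsumR _) ?_)
  rw [← mul_assoc, ENNReal.inv_mul_cancel h2dne h2dtop, one_mul]
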